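/- Let θ ∈ (0,1). Suppose ψ : 𝔻 → ℂ is continuous on the closed unit disk, analytic in its interior, and ψ(1) = ψ(e^{i2πθ}) = 0. Then |ψ(0)| ≤ ((1/(2π(1−θ))) ∫_{2πθ}^{2π} |ψ(e^{it})| dt)^{1−θ} · ((1/(2πθ)) ∫₀^{2πθ} |ψ(e^{it})| dt)^{θ}. -/

import Mathlib

open Complex Set
open scoped Real

private lemma one_sub_exp_eq (t : ℝ) :
    (1 : ℂ) - Complex.exp (t * I)
      = (2 * Real.sin (t/2) : ℝ) * ((Real.cos ((t - π)/2) : ℝ) + (Real.sin ((t - π)/2) : ℝ) * I) := by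
  have hc : Real.cos ((t - π)/2) = Real.sin (t/2) := by
    have h : (t - π)/2 = -(π/2 - t/2) := by ring
    rw [h, Real.cos_neg, Real.cos_pi_div_two_sub]
  have hs : Real.sin ((t - π)/2) = -Real.cos (t/2) := by
    have h : (t - π)/2 = -(π/2 - t/2) := by ring
    rw [h, Real.sin_neg, Real.sin_pi_div_two_sub]
  have hcos : Real.cos t = 2 * Real.cos (t/2)^2 - 1 := by
    have := Real.cos_two_mul (t/2); rwa [show 2*(t/2) = t by ring] at this
  have hsin : Real.sin t = 2 * Real.sin (t/2) * Real.cos (t/2) := by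
    have := Real.sin_two_mul (t/2); rwa [show 2*(t/2) = t by ring] at this
  have hpy := Real.sin_sq_add_cos_sq (t/2)
  apply Complex.ext
  · simp only [Complex.sub_re, Complex.one_re, Complex.exp_ofReal_mul_I_re,
      Complex.add_re, Complex.mul_re, Complex.ofReal_re, Complex.ofReal_im,
      Complex.mul_im, Complex.I_re, Complex.I_im, Complex.add_im, hc, hs, hcos, hsin]
    nlinarith
  · simp only [Complex.sub_im, Complex.one_im, Complex.exp_ofReal_mul_I_im,
      Complex.add_im, Complex.mul_im, Complex.ofReal_re, Complex.ofReal_im,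
      Complex.mul_re, Complex.I_re, Complex.I_im, Complex.add_re, hc, hs, hcos, hsin]
    ring

private lemma arg_one_sub_exp {t : ℝ} (h0 : 0 < t) (h2 : t < 2 * π) :
    (1 - Complex.exp (t * I)).arg = (t - π) / 2 := by
  have hsin : 0 < Real.sin (t/2) :=
    Real.sin_pos_of_pos_of_lt_pi (by positivity) (by linarith)
  rw [one_sub_exp_eq, Complex.ofReal_cos, Complex.ofReal_sin,
    Complex.arg_mul_cos_add_sin_mul_I (by positivity)
      ⟨by linarith [Real.pi_pos], by linarith [Real.pi_pos]⟩]

private lemma meanvalue (f : ℂ → ℂ) (h : DiffContOnCl ℂ f (Metric.ball (0:ℂ) 1)) :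
    ‖f 0‖ ≤ (2 * π)⁻¹ * ∫ t in (0:ℝ)..(2*π), ‖f (circleMap 0 1 t)‖ := by
  have h0 : (0:ℂ) ∈ Metric.ball (0:ℂ) 1 := by simp
  have key := h.circleIntegral_sub_inv_smul h0
  have : f 0 = (2 * π * I : ℂ)⁻¹ • ∮ z in C(0, 1), (z - 0)⁻¹ • f z := by
    rw [key, smul_smul, inv_mul_cancel₀ (by simp [Real.pi_ne_zero]), one_smul]
  rw [this, norm_smul]
  have hn : ‖(2 * π * I : ℂ)⁻¹‖ = (2*π)⁻¹ := by
    simp [Real.pi_pos.le]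
  rw [hn]
  gcongr
  calc ‖∮ z in C(0, 1), (z - 0)⁻¹ • f z‖
      ≤ ∫ t in (0:ℝ)..(2*π), ‖deriv (circleMap 0 1) t • ((circleMap 0 1 t - 0)⁻¹ • f (circleMap 0 1 t))‖ :=
        intervalIntegral.norm_integral_le_integral_norm Real.two_pi_pos.le
    _ = ∫ t in (0:ℝ)..(2*π), ‖f (circleMap 0 1 t)‖ := by
        apply intervalIntegral.integral_congr
        intro t _
        simp only [norm_smul, deriv_circleMap, sub_zero, norm_inv, norm_mul,
          norm_circleMap_zero, Complex.norm_I]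
        simp

private lemma slit_of_ne {z : ℂ} (hz : ‖z‖ ≤ 1) (h1 : z ≠ 1) :
    (1 - z) ∈ Complex.slitPlane := by
  rw [Complex.mem_slitPlane_iff]
  by_cases him : z.im = 0
  · left
    have hre : |z.re| ≤ 1 := by
      calc |z.re| ≤ ‖z‖ := Complex.abs_re_le_norm z
        _ ≤ 1 := hz
    have hne : z.re ≠ 1 := by
      intro h
      exact h1 (Complex.ext (by simp [h]) (by simp [him]))
    simp only [Complex.sub_re, Complex.one_re]
    cases' lt_or_eq_of_le (abs_le.mp hre).2 with h h
    · linarith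
    · exact absurd h hne
  · right
    simpa using him

private lemma key_ineq
    (θ : ℝ) (hθ : θ ∈ Ioo (0:ℝ) 1)
    (ψ : ℂ → ℂ)
    (hcont : ContinuousOn ψ (Metric.closedBall (0:ℂ) 1))
    (hanal : DifferentiableOn ℂ ψ (Metric.ball (0:ℂ) 1))
    (h1 : ψ 1 = 0) (h2 : ψ (Complex.exp ((2 * π * θ : ℝ) * I)) = 0) (γ : ℝ) :
    ‖ψ 0‖ ≤
      Real.exp (γ * π * (1-θ)) * ((2*π)⁻¹ * ∫ t in (0:ℝ)..(2*π*θ), ‖ψ (Complex.exp ((t:ℝ) * I))‖)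
      + Real.exp (-(γ * π * θ)) * ((2*π)⁻¹ * ∫ t in (2*π*θ)..(2*π), ‖ψ (Complex.exp ((t:ℝ) * I))‖) := by
  obtain ⟨hθ0, hθ1⟩ := hθ
  have hπ := Real.pi_pos
  set α : ℝ := 2 * π * θ with hα
  have hα0 : 0 < α := by positivity
  have hα2 : α < 2 * π := by rw [hα]; nlinarith
  set k : ℂ := Complex.exp (-(α:ℝ) * I) with hk
  have hkabs : ‖k‖ = 1 := by
    rw [hk, show (-(α:ℂ) * I : ℂ) = ((-α : ℝ) : ℂ) * I by push_cast; ring]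
    exact Complex.norm_exp_ofReal_mul_I (-α)
  have hknz : k ≠ 0 := by
    intro h; rw [h] at hkabs; simp at hkabs
  set ω : ℂ := Complex.exp ((α:ℝ) * I) with hω
  have hkω : k * ω = 1 := by
    rw [hk, hω, ← Complex.exp_add]; ring_nf; exact Complex.exp_zero
  set F : ℂ → ℂ := fun z =>
    ψ z * Complex.exp ((γ:ℂ) * I * (Complex.log (1 - z) - Complex.log (1 - k * z))) with hF
  -- norm formula
  have hnorm : ∀ z, ‖F z‖ = ‖ψ z‖ * Real.exp (γ * ((1 - k*z).arg - (1 - z).arg)) := by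
    intro z
    rw [hF]
    simp only
    rw [norm_mul]
    congr 1
    rw [Complex.norm_exp]
    congr 1
    simp only [Complex.mul_re, Complex.mul_im, Complex.ofReal_re, Complex.ofReal_im,
      Complex.I_re, Complex.I_im, Complex.sub_re, Complex.sub_im, Complex.log_im]
    ring
  -- uniform bound on the exponential factor
  have hbound : ∀ z, ‖F z‖ ≤ ‖ψ z‖ * Real.exp (|γ| * (2*π)) := by
    intro z
    rw [hnorm z]
    have harg : γ * ((1 - k*z).arg - (1 - z).arg) ≤ |γ| * (2*π) := by
      calc γ * ((1 - k*z).arg - (1 - z).arg) ≤ |γ * ((1 - k*z).arg - (1 - z).arg)| := le_abs_self _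
        _ = |γ| * |(1 - k*z).arg - (1 - z).arg| := abs_mul _ _
        _ ≤ |γ| * (2*π) := by
            apply mul_le_mul_of_nonneg_left _ (abs_nonneg γ)
            calc |(1 - k*z).arg - (1 - z).arg| ≤ |(1 - k*z).arg| + |(1 - z).arg| := abs_sub _ _
              _ ≤ π + π := add_le_add (Complex.abs_arg_le_pi _) (Complex.abs_arg_le_pi _)
              _ = 2*π := by ring
    exact mul_le_mul_of_nonneg_left (Real.exp_le_exp.2 harg) (norm_nonneg _)
  -- differentiability
  have hFd : DifferentiableOn ℂ F (Metric.ball (0:ℂ) 1) := by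
    intro z hz
    have hzlt : ‖z‖ < 1 := by simpa [] using mem_ball_zero_iff.mp hz
    have hz1 : z ≠ 1 := by intro h; rw [h] at hzlt; simp at hzlt
    have hkz1 : k * z ≠ 1 := by
      intro h
      have : ‖k * z‖ = 1 := by rw [h]; simp
      rw [norm_mul, hkabs, one_mul] at this
      exact absurd this hzlt.ne
    have ha : (1 - z) ∈ Complex.slitPlane := slit_of_ne hzlt.le hz1
    have hb : (1 - k * z) ∈ Complex.slitPlane := by
      apply slit_of_ne _ hkz1
      rw [norm_mul, hkabs, one_mul]; exact hzlt.le
    apply DifferentiableAt.differentiableWithinAt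
    apply DifferentiableAt.mul
    · exact (hanal z hz).differentiableAt (Metric.isOpen_ball.mem_nhds hz)
    · apply DifferentiableAt.cexp
      apply DifferentiableAt.const_mul
      apply DifferentiableAt.sub
      · exact (Complex.differentiableAt_log ha).comp z
          ((differentiableAt_const _).sub differentiableAt_id)
      · exact (Complex.differentiableAt_log hb).comp z
          ((differentiableAt_const _).sub ((differentiableAt_const _).mul differentiableAt_id))
  -- continuity
  have hFc : ContinuousOn F (Metric.closedBall (0:ℂ) 1) := by
    intro z hz
    have hzle : ‖z‖ ≤ 1 := by simpa [] using mem_closedBall_zero_iff.mp hz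
    by_cases hbad : z = 1 ∨ z = ω
    · have hψz : ψ z = 0 := by
        rcases hbad with rfl | rfl
        · exact h1
        · exact h2
      have hFz : F z = 0 := by rw [hF]; simp [hψz]
      rw [ContinuousWithinAt, hFz]
      rw [tendsto_zero_iff_norm_tendsto_zero]
      have hg : Filter.Tendsto (fun w => ‖ψ w‖ * Real.exp (|γ| * (2*π)))
          (nhdsWithin z (Metric.closedBall (0:ℂ) 1)) (nhds 0) := by
        have := ((hcont z hz).norm).mul_const (Real.exp (|γ| * (2*π)))
        simpa [hψz, ContinuousWithinAt] using this
      exact squeeze_zero (fun w => norm_nonneg _) (fun w => hbound w) hg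
    · push_neg at hbad
      obtain ⟨hz1, hzω⟩ := hbad
      have hkz1 : k * z ≠ 1 := by
        intro h
        apply hzω
        have : z = k⁻¹ := by field_simp at h ⊢; linear_combination h
        rw [this, hω, hk, ← Complex.exp_neg]; ring_nf
      have ha : (1 - z) ∈ Complex.slitPlane := slit_of_ne hzle hz1
      have hb : (1 - k * z) ∈ Complex.slitPlane := by
        apply slit_of_ne _ hkz1
        rw [norm_mul, hkabs, one_mul]; exact hzle
      apply ContinuousWithinAt.mul (hcont z hz)
      apply ContinuousAt.continuousWithinAt
      apply ContinuousAt.cexp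
      apply ContinuousAt.mul continuousAt_const
      apply ContinuousAt.sub
      · exact (continuousAt_clog ha).comp
          ((continuous_const.sub continuous_id).continuousAt)
      · exact ContinuousAt.comp (g := Complex.log) (f := fun w => 1 - k * w)
          (continuousAt_clog hb) (by fun_prop)
  have hdc : DiffContOnCl ℂ F (Metric.ball (0:ℂ) 1) :=
    ⟨hFd, by rwa [closure_ball (0:ℂ) one_ne_zero]⟩
  have hmv := meanvalue F hdc
  have hF0 : F 0 = ψ 0 := by
    rw [hF]; simp [Complex.log_one]
  have hcm : ∀ t : ℝ, circleMap 0 1 t = Complex.exp ((t:ℝ) * I) := by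
    intro t; simp [circleMap]
  -- boundary arg computations
  have harg1 : ∀ t ∈ Set.Ioo (0:ℝ) α,
      γ * ((1 - k * Complex.exp ((t:ℝ)*I)).arg - (1 - Complex.exp ((t:ℝ)*I)).arg)
        = γ * π * (1-θ) := by
    intro t ht
    have hkz : k * Complex.exp ((t:ℝ)*I) = Complex.exp ((↑(t - α + 2*π) : ℂ) * I) := by
      rw [hk, show ((↑(t - α + 2*π) : ℂ)) * I = (-↑α*I + ↑t*I) + 2*↑π*I by push_cast; ring,
        Complex.exp_add, Complex.exp_two_pi_mul_I, mul_one, Complex.exp_add]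
    rw [hkz, arg_one_sub_exp ht.1 (lt_trans ht.2 hα2),
      arg_one_sub_exp (by linarith [ht.1, hα2]) (by linarith [ht.2, hα0])]
    rw [hα]; ring
  have harg2 : ∀ t ∈ Set.Ioo α (2*π),
      γ * ((1 - k * Complex.exp ((t:ℝ)*I)).arg - (1 - Complex.exp ((t:ℝ)*I)).arg)
        = -(γ * π * θ) := by
    intro t ht
    have hkz : k * Complex.exp ((t:ℝ)*I) = Complex.exp ((↑(t - α) : ℂ) * I) := by
      rw [hk, ← Complex.exp_add]
      congr 1
      push_cast
      ring
    rw [hkz, arg_one_sub_exp (lt_trans hα0 ht.1) ht.2,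
      arg_one_sub_exp (by linarith [ht.1]) (by linarith [ht.2, hα0])]
    rw [hα]; ring
  -- continuity of the boundary integrands
  have hFcont : Continuous (fun t:ℝ => ‖F (circleMap 0 1 t)‖) :=
    (hFc.comp_continuous (continuous_circleMap 0 1)
      (fun t => circleMap_mem_closedBall 0 zero_le_one t)).norm
  have hne_α : ∀ᵐ t : ℝ, t ≠ α := by
    refine (MeasureTheory.ae_iff).mpr ?_
    simpa using Real.volume_singleton
  have hne_2π : ∀ᵐ t : ℝ, t ≠ 2*π := by
    refine (MeasureTheory.ae_iff).mpr ?_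
    simpa using Real.volume_singleton
  have hsplit : ∫ t in (0:ℝ)..(2*π), ‖F (circleMap 0 1 t)‖
      = (∫ t in (0:ℝ)..α, ‖F (circleMap 0 1 t)‖) + ∫ t in α..(2*π), ‖F (circleMap 0 1 t)‖ :=
    (intervalIntegral.integral_add_adjacent_intervals
      (hFcont.intervalIntegrable _ _) (hFcont.intervalIntegrable _ _)).symm
  have hI1 : ∫ t in (0:ℝ)..α, ‖F (circleMap 0 1 t)‖
      = Real.exp (γ*π*(1-θ)) * ∫ t in (0:ℝ)..α, ‖ψ (Complex.exp ((t:ℝ) * I))‖ := by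
    rw [← intervalIntegral.integral_const_mul]
    apply intervalIntegral.integral_congr_ae
    filter_upwards [hne_α] with t ht hmem
    rw [Set.uIoc_of_le hα0.le] at hmem
    have ht' : t ∈ Set.Ioo (0:ℝ) α := ⟨hmem.1, lt_of_le_of_ne hmem.2 ht⟩
    rw [hcm t, hnorm, harg1 t ht', mul_comm]
  have hI2 : ∫ t in α..(2*π), ‖F (circleMap 0 1 t)‖
      = Real.exp (-(γ*π*θ)) * ∫ t in α..(2*π), ‖ψ (Complex.exp ((t:ℝ) * I))‖ := by
    rw [← intervalIntegral.integral_const_mul]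
    apply intervalIntegral.integral_congr_ae
    filter_upwards [hne_2π] with t ht hmem
    rw [Set.uIoc_of_le hα2.le] at hmem
    have ht' : t ∈ Set.Ioo α (2*π) := ⟨hmem.1, lt_of_le_of_ne hmem.2 ht⟩
    rw [hcm t, hnorm, harg2 t ht', mul_comm]
  calc ‖ψ 0‖ = ‖F 0‖ := by rw [hF0]
    _ ≤ (2*π)⁻¹ * ∫ t in (0:ℝ)..(2*π), ‖F (circleMap 0 1 t)‖ := hmv
    _ = _ := by rw [hsplit, hI1, hI2]; ring

/-- Corollary of the Jensen-type inequality: if `ψ` is continuous on the closed unit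
disk, analytic in its interior, and `ψ(1) = ψ(e^{2πθi}) = 0` for some `θ ∈ (0,1)`, then
`|ψ(0)| ≤ ((1/(2π(1−θ))) ∫_{2πθ}^{2π} |ψ(e^{it})| dt)^{1−θ} ·
((1/(2πθ)) ∫₀^{2πθ} |ψ(e^{it})| dt)^{θ}`. -/
theorem jensen_corollary_disk
    (θ : ℝ) (hθ : θ ∈ Ioo (0:ℝ) 1)
    (ψ : ℂ → ℂ)
    (hcont : ContinuousOn ψ (Metric.closedBall (0:ℂ) 1))
    (hanal : DifferentiableOn ℂ ψ (Metric.ball (0:ℂ) 1))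
    (h1 : ψ 1 = 0) (h2 : ψ (Complex.exp ((2 * π * θ : ℝ) * I)) = 0) :
    ‖ψ 0‖ ≤
      ((1 / (2 * π * (1 - θ))) * ∫ t in (2 * π * θ)..(2 * π),
          ‖ψ (Complex.exp ((t:ℝ) * I))‖) ^ (1 - θ) *
        ((1 / (2 * π * θ)) * ∫ t in (0:ℝ)..(2 * π * θ),
          ‖ψ (Complex.exp ((t:ℝ) * I))‖) ^ θ := by

  obtain ⟨hθ0, hθ1⟩ := hθ
  have hπ := Real.pi_pos
  set J₁ : ℝ := ∫ t in (0:ℝ)..(2*π*θ), ‖ψ (Complex.exp ((t:ℝ) * I))‖ with hJ₁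
  set J₂ : ℝ := ∫ t in (2*π*θ)..(2*π), ‖ψ (Complex.exp ((t:ℝ) * I))‖ with hJ₂
  set B : ℝ := (1 / (2 * π * θ)) * J₁ with hB
  set A : ℝ := (1 / (2 * π * (1 - θ))) * J₂ with hA
  have hJ₁0 : 0 ≤ J₁ :=
    intervalIntegral.integral_nonneg (by positivity) (fun t _ => norm_nonneg _)
  have hJ₂0 : 0 ≤ J₂ :=
    intervalIntegral.integral_nonneg (by nlinarith) (fun t _ => norm_nonneg _)
  have h1θ : (0:ℝ) < 1 - θ := by linarith
  have hB0 : 0 ≤ B := mul_nonneg (by positivity) hJ₁0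
  have hA0 : 0 ≤ A := mul_nonneg (by positivity) hJ₂0
  -- the key inequality, rewritten in terms of A and B
  have key : ∀ γ : ℝ, ‖ψ 0‖ ≤
      θ * Real.exp (γ * π * (1-θ)) * B + (1-θ) * Real.exp (-(γ * π * θ)) * A := by
    intro γ
    have h := key_ineq θ ⟨hθ0, hθ1⟩ ψ hcont hanal h1 h2 γ
    have e1 : (2*π)⁻¹ * J₁ = θ * B := by
      rw [hB]; field_simp
    have e2 : (2*π)⁻¹ * J₂ = (1-θ) * A := by
      rw [hA]; field_simp
    rw [← hJ₁, ← hJ₂, e1, e2] at h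
    calc ‖ψ 0‖ ≤ Real.exp (γ * π * (1-θ)) * (θ * B) + Real.exp (-(γ * π * θ)) * ((1-θ) * A) := h
      _ = θ * Real.exp (γ * π * (1-θ)) * B + (1-θ) * Real.exp (-(γ * π * θ)) * A := by ring
  rcases eq_or_lt_of_le hB0 with hBz | hBpos
  · -- B = 0 : let γ → +∞
    rw [← hBz, Real.zero_rpow hθ0.ne', mul_zero]
    have hten : Filter.Tendsto (fun γ : ℝ => θ * Real.exp (γ * π * (1-θ)) * 0
        + (1-θ) * Real.exp (-(γ * π * θ)) * A) Filter.atTop (nhds 0) := by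
      have h1' : Filter.Tendsto (fun γ : ℝ => -(γ * π * θ)) Filter.atTop Filter.atBot := by
        have := (Filter.tendsto_id.atTop_mul_const (show (0:ℝ) < π * θ by positivity))
        have h2' := Filter.tendsto_neg_atBot_iff.mpr this
        simpa [mul_assoc] using h2'
      have := ((Real.tendsto_exp_atBot.comp h1').const_mul (1-θ)).mul_const A
      simpa [Function.comp] using this
    refine ge_of_tendsto' hten (fun γ => ?_)
    have := key γ
    rw [← hBz] at this
    linarith [this]
  · rcases eq_or_lt_of_le hA0 with hAz | hApos
    · -- A = 0 : let γ → -∞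
      rw [← hAz, Real.zero_rpow h1θ.ne', zero_mul]
      have hten : Filter.Tendsto (fun γ : ℝ => θ * Real.exp (γ * π * (1-θ)) * B
          + (1-θ) * Real.exp (-(γ * π * θ)) * 0) Filter.atBot (nhds 0) := by
        have h1' : Filter.Tendsto (fun γ : ℝ => γ * π * (1-θ)) Filter.atBot Filter.atBot := by
          have := (Filter.tendsto_id.atBot_mul_const (show (0:ℝ) < π * (1-θ) by positivity))
          simpa [mul_assoc] using this
        have := ((Real.tendsto_exp_atBot.comp h1').const_mul θ).mul_const B
        simpa [Function.comp] using this
      refine ge_of_tendsto' hten (fun γ => ?_)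
      have := key γ
      rw [← hAz] at this
      linarith [this]
    · -- A, B > 0 : optimal γ
      set γ : ℝ := (Real.log A - Real.log B) / π with hγ
      have hγπ : γ * π = Real.log A - Real.log B := by
        rw [hγ]; field_simp
      have hrw : A ^ (1-θ) * B ^ θ = Real.exp ((1-θ) * Real.log A + θ * Real.log B) := by
        rw [Real.rpow_def_of_pos hApos, Real.rpow_def_of_pos hBpos, ← Real.exp_add]
        ring_nf
      have e1 : Real.exp (γ * π * (1-θ)) * B = A ^ (1-θ) * B ^ θ := by
        rw [hrw]
        conv_lhs => rw [← Real.exp_log hBpos]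
        rw [← Real.exp_add]
        congr 1
        rw [show γ * π * (1-θ) = (γ * π) * (1-θ) by ring, hγπ]
        ring
      have e2 : Real.exp (-(γ * π * θ)) * A = A ^ (1-θ) * B ^ θ := by
        rw [hrw]
        conv_lhs => rw [← Real.exp_log hApos]
        rw [← Real.exp_add]
        congr 1
        rw [show -(γ * π * θ) = -((γ * π) * θ) by ring, hγπ]
        ring
      calc ‖ψ 0‖ ≤ θ * Real.exp (γ * π * (1-θ)) * B + (1-θ) * Real.exp (-(γ * π * θ)) * A :=
            key γ
        _ = θ * (Real.exp (γ * π * (1-θ)) * B) + (1-θ) * (Real.exp (-(γ * π * θ)) * A) := by ring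
        _ = A ^ (1-θ) * B ^ θ := by rw [e1, e2]; ring
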